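/- Assume E and F are nontrivial. Suppose X : E → ℝ → H assigns to each v ∈ E a primal trajectory X v with initial data v, and X̄ : F → ℝ → H assigns to each v̄ ∈ F a dual trajectory X̄ v̄ with initial data v̄. Then for every fixed t ≥ 0, the supremum over unit vectors v ∈ E of ‖C (X v t)‖ equals the supremum over unit vectors v̄ ∈ F of ‖B* (X̄ v̄ t)‖ (suprema taken in the extended nonnegative reals). (Pointwise-in-time equality of primal and dual peak responses, intermediate step of Theorem 1.) -/

import Mathlib

open ContinuousLinearMap
open scoped RealInnerProductSpace ENNReal NNReal

/-- Pointwise-in-time equality of primal and dual peak responses, an intermediate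
step of Theorem 1. -/
theorem stmt_9
    {H E F : Type*}
    [NormedAddCommGroup H] [InnerProductSpace ℝ H] [CompleteSpace H]
    [NormedAddCommGroup E] [InnerProductSpace ℝ E] [FiniteDimensional ℝ E]
    [NormedAddCommGroup F] [InnerProductSpace ℝ F] [FiniteDimensional ℝ F]
    [Nontrivial E] [Nontrivial F]
    (T A : H →L[ℝ] H) (B : E →L[ℝ] H) (C : H →L[ℝ] F)
    (X : E → ℝ → H)
    (hX : ∀ v : E, ∀ t ≥ (0 : ℝ), HasDerivAt (fun s => T (X v s)) (A (X v t)) t)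
    (hX0 : ∀ v : E, T (X v 0) = B v)
    (Xb : F → ℝ → H) (Xb' : F → ℝ → H)
    (hXbderiv : ∀ (vb : F) (t : ℝ), HasDerivAt (Xb vb) (Xb' vb t) t)
    (hXbdyn : ∀ vb : F, ∀ t ≥ (0 : ℝ), adjoint T (Xb' vb t) = adjoint A (Xb vb t))
    (hXb0 : ∀ vb : F, adjoint T (Xb vb 0) = adjoint C vb) :
    ∀ t ≥ (0 : ℝ),
      (⨆ v ∈ {v : E | ‖v‖ = 1}, (‖C (X v t)‖₊ : ℝ≥0∞)) =
        ⨆ vb ∈ {vb : F | ‖vb‖ = 1}, (‖adjoint B (Xb vb t)‖₊ : ℝ≥0∞) := by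
  intro t ht
  have key : ∀ (v : E) (vb : F), ⟪vb, C (X v t)⟫ = ⟪adjoint B (Xb vb t), v⟫ := by
    intro v vb
    set g : ℝ → ℝ := fun s => ⟪Xb vb (t - s), T (X v s)⟫ with hg
    have hderiv : ∀ s ∈ Set.Icc (0:ℝ) t, HasDerivAt g 0 s := by
      intro s hs
      have h1 : HasDerivAt (fun s : ℝ => Xb vb (t - s)) ((-1 : ℝ) • Xb' vb (t - s)) s := by
        have := (hXbderiv vb (t - s)).scomp s
          (((hasDerivAt_id s).const_sub t) : HasDerivAt (fun u : ℝ => t - u) (-1) s)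
        simpa [Function.comp_def] using this
      have h2 := hX v s hs.1
      have h3 := h1.inner ℝ h2
      have hz : ⟪Xb vb (t - s), A (X v s)⟫ + ⟪(-1 : ℝ) • Xb' vb (t - s), T (X v s)⟫ = 0 := by
        have hrel := hXbdyn vb (t - s) (by linarith [hs.2])
        rw [inner_smul_left, ← adjoint_inner_left A, ← hrel, adjoint_inner_left]
        simp
      rw [hz] at h3
      exact h3
    have hcont : ContinuousOn g (Set.Icc 0 t) := fun x hx =>
      (hderiv x hx).continuousAt.continuousWithinAt
    have hconst := constant_of_has_deriv_right_zero hcont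
      (fun x hx => ((hderiv x ⟨hx.1, hx.2.le⟩).hasDerivWithinAt))
    have hgt : g t = g 0 := hconst t ⟨ht, le_rfl⟩
    have e1 : g t = ⟪vb, C (X v t)⟫ := by
      simp only [hg, sub_self]
      rw [← adjoint_inner_left T, hXb0, adjoint_inner_left]
    have e2 : g 0 = ⟪adjoint B (Xb vb t), v⟫ := by
      simp only [hg, sub_zero]
      rw [hX0, ← adjoint_inner_left B]
    rw [← e1, ← e2, hgt]
  apply le_antisymm
  · refine iSup₂_le fun v hv => ?_
    rcases eq_or_ne (C (X v t)) 0 with h0 | h0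
    · simp [h0]
    · set w := ‖C (X v t)‖⁻¹ • C (X v t) with hw
      have hwn : ‖w‖ = 1 := by
        rw [hw, norm_smul, norm_inv, norm_norm,
          inv_mul_cancel₀ (norm_ne_zero_iff.2 h0)]
      have hle : ‖C (X v t)‖ ≤ ‖adjoint B (Xb w t)‖ := by
        have : ⟪w, C (X v t)⟫ = ‖C (X v t)‖ := by
          rw [hw, real_inner_smul_left, real_inner_self_eq_norm_sq, mul_comm, sq,
            mul_assoc, mul_inv_cancel₀ (norm_ne_zero_iff.2 h0), mul_one]
        calc ‖C (X v t)‖ = ⟪adjoint B (Xb w t), v⟫ := by rw [← key v w, this]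
          _ ≤ ‖adjoint B (Xb w t)‖ * ‖v‖ := real_inner_le_norm _ _
          _ = ‖adjoint B (Xb w t)‖ := by rw [hv, mul_one]
      calc (‖C (X v t)‖₊ : ℝ≥0∞) ≤ (‖adjoint B (Xb w t)‖₊ : ℝ≥0∞) := by
            exact_mod_cast hle
        _ ≤ _ := le_iSup₂ (f := fun vb _ => (‖adjoint B (Xb vb t)‖₊ : ℝ≥0∞)) w hwn
  · refine iSup₂_le fun vb hvb => ?_
    rcases eq_or_ne (adjoint B (Xb vb t)) 0 with h0 | h0
    · simp [h0]
    · set w := ‖adjoint B (Xb vb t)‖⁻¹ • adjoint B (Xb vb t) with hw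
      have hwn : ‖w‖ = 1 := by
        rw [hw, norm_smul, norm_inv, norm_norm,
          inv_mul_cancel₀ (norm_ne_zero_iff.2 h0)]
      have hle : ‖adjoint B (Xb vb t)‖ ≤ ‖C (X w t)‖ := by
        have : ⟪adjoint B (Xb vb t), w⟫ = ‖adjoint B (Xb vb t)‖ := by
          rw [hw, real_inner_smul_right, real_inner_self_eq_norm_sq, mul_comm, sq,
            mul_assoc, mul_inv_cancel₀ (norm_ne_zero_iff.2 h0), mul_one]
        calc ‖adjoint B (Xb vb t)‖ = ⟪vb, C (X w t)⟫ := by rw [key w vb, this]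
          _ ≤ ‖vb‖ * ‖C (X w t)‖ := real_inner_le_norm _ _
          _ = ‖C (X w t)‖ := by rw [hvb, one_mul]
      calc (‖adjoint B (Xb vb t)‖₊ : ℝ≥0∞) ≤ (‖C (X w t)‖₊ : ℝ≥0∞) := by
            exact_mod_cast hle
        _ ≤ _ := le_iSup₂ (f := fun v _ => (‖C (X v t)‖₊ : ℝ≥0∞)) w hwn
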